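/- Existence lemma: if X is a maximal consistent set with the ∀-property over a signature with infinitely many constants, then there exists a maximal consistent set Y with the ∀-property over the same signature such that {ψ : ⟨ā⟩ψ ∈ X} ⊆ Y. -/

import Mathlib

/-- Terms: variables or constants. -/
inductive Tm (C : Type) : Type
  | var : ℕ → Tm C
  | const : C → Tm C
deriving DecidableEq

/-- Formulas of first-order coalition logic over a signature ⟨n, C, Ap⟩. -/
inductive Form (n : ℕ) (C : Type) (Ap : Type) : Type
  | atom : Ap → Form n C Ap
  | neg : Form n C Ap → Form n C Ap
  | and : Form n C Ap → Form n C Ap → Form n C Ap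
  | box : (Fin n → Tm C) → Form n C Ap → Form n C Ap
  | all : ℕ → Form n C Ap → Form n C Ap

namespace Form

variable {n : ℕ} {C Ap : Type}

def imp (φ ψ : Form n C Ap) : Form n C Ap := .neg (.and φ (.neg ψ))
def iff (φ ψ : Form n C Ap) : Form n C Ap := .and (imp φ ψ) (imp ψ φ)
def ex (x : ℕ) (φ : Form n C Ap) : Form n C Ap := .neg (.all x (.neg φ))

open Classical in
/-- Substitution of a term for a variable. -/
noncomputable def substT (t : Tm C) (x : ℕ) : Form n C Ap → Form n C Ap
  | .atom p => .atom p
  | .neg φ => .neg (substT t x φ)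
  | .and φ ψ => .and (substT t x φ) (substT t x ψ)
  | .box ts φ => .box (fun i => if ts i = .var x then t else ts i) (substT t x φ)
  | .all y φ => if y = x then .all y φ else .all y (substT t x φ)

/-- Substitution of a constant for a variable. -/
noncomputable def subst (a : C) (x : ℕ) (φ : Form n C Ap) : Form n C Ap := substT (.const a) x φ

/-- Free variables. -/
def FV : Form n C Ap → Finset ℕ
  | .atom _ => ∅
  | .neg φ => FV φ
  | .and φ ψ => FV φ ∪ FV ψ
  | .box ts φ => FV φ ∪ Finset.univ.biUnion (fun i => match ts i with | Tm.var x => {x} | _ => ∅)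
  | .all y φ => FV φ \ {y}

/-- A sentence (closed formula). -/
def closed (φ : Form n C Ap) : Prop := FV φ = ∅

/-- Universal closure of a formula. -/
def closure (φ : Form n C Ap) : Form n C Ap := ((FV φ).sort (· ≤ ·)).foldr Form.all φ

def size : Form n C Ap → ℕ
  | .atom _ => 1
  | .neg φ => size φ + 1
  | .and φ ψ => size φ + size ψ + 1
  | .box _ φ => size φ + 1
  | .all _ φ => size φ + 1

theorem size_substT (t : Tm C) (x : ℕ) (φ : Form n C Ap) :
    size (substT t x φ) = size φ := by
  induction φ with
  | atom p => rfl
  | neg φ ih => simp [substT, size, ih]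
  | and φ ψ ih1 ih2 => simp [substT, size, ih1, ih2]
  | box ts φ ih => simp [substT, size, ih]
  | all y φ ih => by_cases h : y = x <;> simp [substT, size, h, ih]

/-- Whether a term occurs in a formula. -/
def occursT (t : Tm C) : Form n C Ap → Prop
  | .atom _ => False
  | .neg φ => occursT t φ
  | .and φ ψ => occursT t φ ∨ occursT t ψ
  | .box ts φ => (∃ i, ts i = t) ∨ occursT t φ
  | .all y φ => (t = Tm.var y) ∨ occursT t φ

end Form

/-- A concurrent game structure over a signature ⟨n, C, Ap⟩ (actions = constants). -/
structure CGS (n : ℕ) (C : Type) (Ap : Type) where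
  S : Type
  R : S → (Fin n → C) → S → Prop
  V : Ap → S → Prop

namespace CGS

variable {n : ℕ} {C Ap : Type}

def Serial (G : CGS n C Ap) : Prop := ∀ s d, ∃ t, G.R s d t

def Functional (G : CGS n C Ap) : Prop := ∀ s d t v, G.R s d t → G.R s d v → t = v

end CGS

/-- Satisfaction of (closed) formulas in a CGS. -/
def Sat {n : ℕ} {C Ap : Type} (G : CGS n C Ap) : G.S → Form n C Ap → Prop
  | s, .atom p => G.V p s
  | s, .neg φ => ¬ Sat G s φ
  | s, .and φ ψ => Sat G s φ ∧ Sat G s ψ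
  | s, .box ts φ => ∃ d : Fin n → C, (∀ i, ts i = Tm.const (d i)) ∧ ∃ t, G.R s d t ∧ Sat G t φ
  | s, .all x φ => ∀ a : C, Sat G s (Form.subst a x φ)
termination_by _ φ => Form.size φ
decreasing_by all_goals simp [Form.subst, Form.size_substT, Form.size] <;> omega

/-- Truth of a possibly open formula: truth of its universal closure. -/
def SatC {n : ℕ} {C Ap : Type} (G : CGS n C Ap) (s : G.S) (φ : Form n C Ap) : Prop :=
  Sat G s (Form.closure φ)

/-- Validity in a CGS. -/
def ValidIn {n : ℕ} {C Ap : Type} (G : CGS n C Ap) (φ : Form n C Ap) : Prop :=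
  ∀ s : G.S, SatC G s φ

/-- Propositional evaluation treating atoms, boxes and quantified formulas as atomic. -/
def evalP {n : ℕ} {C Ap : Type} (v : Form n C Ap → Prop) : Form n C Ap → Prop
  | .neg φ => ¬ evalP v φ
  | .and φ ψ => evalP v φ ∧ evalP v ψ
  | .atom p => v (.atom p)
  | .box ts φ => v (.box ts φ)
  | .all x φ => v (.all x φ)

/-- Propositional tautologies. -/
def Taut {n : ℕ} {C Ap : Type} (φ : Form n C Ap) : Prop :=
  ∀ v : Form n C Ap → Prop, evalP v φ

/-- The axiom system of first-order coalition logic. -/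
inductive Deriv {n : ℕ} {C Ap : Type} : Form n C Ap → Prop
  | PC {φ} : Taut φ → Deriv φ
  | K (ts : Fin n → Tm C) (φ ψ) :
      Deriv (Form.iff (.and (.box ts φ) (.box ts ψ)) (.box ts (.and φ ψ)))
  | N (ts : Fin n → Tm C) (φ) :
      Deriv (Form.iff (.neg (.box ts φ)) (.box ts (.neg φ)))
  | E (x : ℕ) (t : Tm C) (φ) : Deriv (Form.imp (.all x φ) (Form.substT t x φ))
  | B (ts : Fin n → Tm C) (x : ℕ) (φ) (h : ∀ i, ts i ≠ Tm.var x) :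
      Deriv (Form.imp (.all x (.box ts φ)) (.box ts (.all x φ)))
  | MP {φ ψ} : Deriv (Form.imp φ ψ) → Deriv φ → Deriv ψ
  | Nec (ts : Fin n → Tm C) {φ} : Deriv φ → Deriv (.box ts φ)
  | Gen {φ ψ} (t : Tm C) (x : ℕ) :
      Deriv (Form.imp φ (Form.substT t x ψ)) → ¬ Form.occursT t φ →
      Deriv (Form.imp φ (.all x ψ))

/-- Derivability from a set of formulas. -/
def DerivFrom {n : ℕ} {C Ap : Type} (X : Set (Form n C Ap)) (φ : Form n C Ap) : Prop :=
  ∃ L : List (Form n C Ap), (∀ ψ ∈ L, ψ ∈ X) ∧ Deriv (L.foldr Form.imp φ)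

def Consistent {n : ℕ} {C Ap : Type} (X : Set (Form n C Ap)) : Prop :=
  ¬ ∃ φ, DerivFrom X φ ∧ DerivFrom X (.neg φ)

/-- A set of sentences. -/
def SentenceSet {n : ℕ} {C Ap : Type} (X : Set (Form n C Ap)) : Prop :=
  ∀ φ ∈ X, Form.closed φ

/-- Maximal consistent set (of sentences). -/
def MCS {n : ℕ} {C Ap : Type} (X : Set (Form n C Ap)) : Prop :=
  Consistent X ∧ ∀ ψ, Form.closed ψ → ψ ∉ X → ¬ Consistent (insert ψ X)

/-- The ∀-property. -/
def AllProp {n : ℕ} {C Ap : Type} (X : Set (Form n C Ap)) : Prop :=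
  ∀ (φ : Form n C Ap) (x : ℕ), Form.FV φ ⊆ {x} →
    ∃ a : C, Form.imp (Form.subst a x φ) (.all x φ) ∈ X

/-- The canonical model. -/
def canonical (n : ℕ) (C Ap : Type) : CGS n C Ap where
  S := {X : Set (Form n C Ap) // SentenceSet X ∧ MCS X ∧ AllProp X}
  R := fun X d Y => ∀ φ, φ ∈ Y.1 → Form.box (fun i => Tm.const (d i)) φ ∈ X.1
  V := fun p X => Form.atom p ∈ X.1

/-- Renaming of constants. -/
def Tm.mapC {C C' : Type} (f : C → C') : Tm C → Tm C'
  | .var x => .var x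
  | .const c => .const (f c)

def Form.mapC {n : ℕ} {C C' Ap : Type} (f : C → C') : Form n C Ap → Form n C' Ap
  | .atom p => .atom p
  | .neg φ => .neg (mapC f φ)
  | .and φ ψ => .and (mapC f φ) (mapC f ψ)
  | .box ts φ => .box (fun i => (ts i).mapC f) (mapC f φ)
  | .all y φ => .all y (mapC f φ)


section Aux

variable {n : ℕ} {C Ap : Type}

lemma evalP_foldr (v : Form n C Ap → Prop) (L : List (Form n C Ap)) (χ : Form n C Ap) :
    evalP v (L.foldr Form.imp χ) ↔ ((∀ ψ ∈ L, evalP v ψ) → evalP v χ) := by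
  induction L with
  | nil => simp
  | cons h L ih =>
    simp only [List.foldr_cons, Form.imp, evalP, ih, List.mem_cons]
    constructor
    · intro h1 h2
      by_contra hχ
      exact h1 ⟨h2 _ (Or.inl rfl), fun h3 => hχ (h3 fun ψ hψ => h2 ψ (Or.inr hψ))⟩
    · rintro h1 ⟨h2, h3⟩
      exact h3 fun h4 => h1 fun ψ hψ => hψ.elim (fun e => e ▸ h2) (h4 ψ)

lemma deriv_weaken {L L' : List (Form n C Ap)} {χ : Form n C Ap}
    (hsub : ∀ ψ ∈ L, ψ ∈ L') (h : Deriv (L.foldr Form.imp χ)) :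
    Deriv (L'.foldr Form.imp χ) := by
  refine Deriv.MP (Deriv.PC ?_) h
  intro v
  simp only [Form.imp, evalP, evalP_foldr]
  intro ⟨h1, h2⟩
  exact h2 fun hall => h1 fun ψ hψ => hall ψ (hsub ψ hψ)

lemma deriv_foldr_mp {N : List (Form n C Ap)} {A B : Form n C Ap}
    (h1 : Deriv (N.foldr Form.imp (Form.imp A B)))
    (h2 : Deriv (N.foldr Form.imp A)) : Deriv (N.foldr Form.imp B) := by
  refine Deriv.MP (Deriv.MP (Deriv.PC ?_) h1) h2
  intro v
  simp only [Form.imp, evalP, evalP_foldr]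
  tauto

lemma df_of_deriv {X : Set (Form n C Ap)} {φ : Form n C Ap} (h : Deriv φ) :
    DerivFrom X φ := ⟨[], by simp, h⟩

lemma df_mem {X : Set (Form n C Ap)} {φ : Form n C Ap} (h : φ ∈ X) :
    DerivFrom X φ := by
  refine ⟨[φ], by simp [h], Deriv.PC ?_⟩
  intro v
  simp [Form.imp, evalP]

lemma df_mp {X : Set (Form n C Ap)} {φ ψ : Form n C Ap}
    (h1 : DerivFrom X (Form.imp φ ψ)) (h2 : DerivFrom X φ) : DerivFrom X ψ := by
  obtain ⟨L, hL, dL⟩ := h1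
  obtain ⟨M, hM, dM⟩ := h2
  refine ⟨L ++ M, ?_, ?_⟩
  · intro χ hχ
    rcases List.mem_append.1 hχ with h | h
    · exact hL χ h
    · exact hM χ h
  · exact deriv_foldr_mp
      (deriv_weaken (fun χ hχ => List.mem_append.2 (Or.inl hχ)) dL)
      (deriv_weaken (fun χ hχ => List.mem_append.2 (Or.inr hχ)) dM)

lemma df_foldr {X : Set (Form n C Ap)} {ψ : Form n C Ap} :
    ∀ {L : List (Form n C Ap)}, DerivFrom X (L.foldr Form.imp ψ) →
      (∀ χ ∈ L, DerivFrom X χ) → DerivFrom X ψ := by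
  intro L
  induction L with
  | nil => exact fun h _ => h
  | cons a L ih =>
    intro h hL
    exact ih (df_mp h (hL a (by simp))) fun χ hχ => hL χ (by simp [hχ])

lemma df_deduction {X : Set (Form n C Ap)} {φ ψ : Form n C Ap}
    (h : DerivFrom (insert φ X) ψ) : DerivFrom X (Form.imp φ ψ) := by
  classical
  obtain ⟨L, hL, dL⟩ := h
  refine ⟨L.filter (fun χ => χ ∈ X), ?_, ?_⟩
  · intro χ hχ
    exact (List.mem_filter.1 hχ).2.rec (by
      have := (List.mem_filter.1 hχ).2
      simpa using this)
  · have hsub : ∀ χ ∈ L, χ ∈ L.filter (fun χ => χ ∈ X) ++ [φ] := by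
      intro χ hχ
      rcases hL χ hχ with h | h
      · simp [h]
      · exact List.mem_append.2 (Or.inl (List.mem_filter.2 ⟨hχ, by simpa using h⟩))
    have := deriv_weaken hsub dL
    simpa [List.foldr_append] using this

lemma mcs_mem {X : Set (Form n C Ap)} (hmcs : MCS X) {φ : Form n C Ap}
    (hcl : Form.closed φ) (h : DerivFrom X φ) : φ ∈ X := by
  by_contra hφ
  have hinc := hmcs.2 φ hcl hφ
  rw [Consistent, not_not] at hinc
  obtain ⟨χ, h1, h2⟩ := hinc
  exact hmcs.1 ⟨χ, df_mp (df_deduction h1) h, df_mp (df_deduction h2) h⟩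

lemma mcs_neg {X : Set (Form n C Ap)} (hmcs : MCS X) {φ : Form n C Ap}
    (hcl : Form.closed φ) (h : φ ∉ X) : Form.neg φ ∈ X := by
  have hinc := hmcs.2 φ hcl h
  rw [Consistent, not_not] at hinc
  obtain ⟨χ, h1, h2⟩ := hinc
  have d1 : DerivFrom X (Form.imp φ χ) := df_deduction h1
  have d2 : DerivFrom X (Form.imp φ (Form.neg χ)) := df_deduction h2
  have taut : Deriv (Form.imp (Form.imp φ χ)
      (Form.imp (Form.imp φ (Form.neg χ)) (Form.neg φ))) := by
    refine Deriv.PC ?_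
    intro v
    simp only [Form.imp, evalP]
    tauto
  have : DerivFrom X (Form.neg φ) := df_mp (df_mp (df_of_deriv taut) d1) d2
  exact mcs_mem hmcs (by exact hcl) this

lemma deriv_box_mp (ts : Fin n → Tm C) (A B : Form n C Ap) :
    Deriv (Form.imp (Form.box ts (Form.imp A B))
      (Form.imp (Form.box ts A) (Form.box ts B))) := by
  have hN1 := Deriv.N (Ap := Ap) ts (Form.and A (Form.neg B))
  have hK := Deriv.K (Ap := Ap) ts A (Form.neg B)
  have hN2 := Deriv.N (Ap := Ap) ts B
  refine Deriv.MP (Deriv.MP (Deriv.MP (Deriv.PC ?_) hN1) hK) hN2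
  intro v
  simp only [Form.imp, Form.iff, evalP]
  tauto

lemma deriv_box_mp' (ts : Fin n → Tm C) (A B : Form n C Ap) :
    Deriv (Form.imp (Form.imp (Form.box ts A) (Form.box ts B))
      (Form.box ts (Form.imp A B))) := by
  have hN1 := Deriv.N (Ap := Ap) ts (Form.and A (Form.neg B))
  have hK := Deriv.K (Ap := Ap) ts A (Form.neg B)
  have hN2 := Deriv.N (Ap := Ap) ts B
  refine Deriv.MP (Deriv.MP (Deriv.MP (Deriv.PC ?_) hN1) hK) hN2
  intro v
  simp only [Form.imp, Form.iff, evalP]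
  tauto

lemma df_box_foldr {X : Set (Form n C Ap)} (ts : Fin n → Tm C) {χ : Form n C Ap} :
    ∀ {N : List (Form n C Ap)}, (∀ ψ ∈ N, Form.box ts ψ ∈ X) →
      DerivFrom X (Form.box ts (N.foldr Form.imp χ)) →
      DerivFrom X (Form.box ts χ) := by
  intro N
  induction N with
  | nil => exact fun _ h => h
  | cons a N ih =>
    intro hN h
    have h1 : DerivFrom X (Form.box ts (N.foldr Form.imp χ)) :=
      df_mp (df_mp (df_of_deriv (deriv_box_mp ts a (N.foldr Form.imp χ))) h)
        (df_mem (hN a (by simp)))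
    exact ih (fun ψ hψ => hN ψ (by simp [hψ])) h1

lemma FV_box_const (c : Fin n → C) (ψ : Form n C Ap) :
    Form.FV (Form.box (fun i => Tm.const (c i)) ψ) = Form.FV ψ := by
  simp [Form.FV]

lemma FV_substT_const (a : C) (x : ℕ) (φ : Form n C Ap) :
    Form.FV (Form.substT (Tm.const a) x φ) ⊆ Form.FV φ \ {x} := by
  induction φ with
  | atom p => simp [Form.substT, Form.FV]
  | neg φ ih => simpa [Form.substT, Form.FV] using ih
  | and φ ψ ih1 ih2 =>
    simp only [Form.substT, Form.FV]
    intro y hy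
    rcases Finset.mem_union.1 hy with h | h
    · rcases Finset.mem_sdiff.1 (ih1 h) with ⟨h1, h2⟩
      exact Finset.mem_sdiff.2 ⟨Finset.mem_union.2 (Or.inl h1), h2⟩
    · rcases Finset.mem_sdiff.1 (ih2 h) with ⟨h1, h2⟩
      exact Finset.mem_sdiff.2 ⟨Finset.mem_union.2 (Or.inr h1), h2⟩
  | box ts φ ih =>
    simp only [Form.substT, Form.FV]
    intro y hy
    rcases Finset.mem_union.1 hy with h | h
    · rcases Finset.mem_sdiff.1 (ih h) with ⟨h1, h2⟩
      exact Finset.mem_sdiff.2 ⟨Finset.mem_union.2 (Or.inl h1), h2⟩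
    · rcases Finset.mem_biUnion.1 h with ⟨i, _, hi⟩
      by_cases hts : ts i = Tm.var x
      · simp [hts] at hi
      · simp only [if_neg hts] at hi
        rcases hts2 : ts i with z | cc
        · rw [hts2] at hi
          simp only [Finset.mem_singleton] at hi
          subst hi
          refine Finset.mem_sdiff.2 ⟨Finset.mem_union.2 (Or.inr ?_), ?_⟩
          · exact Finset.mem_biUnion.2 ⟨i, Finset.mem_univ i, by rw [hts2]; simp⟩
          · simp only [Finset.mem_singleton]
            intro hh
            subst hh
            exact hts hts2
        · rw [hts2] at hi
          simp at hi
  | all y φ ih =>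
    by_cases hyx : y = x
    · subst hyx
      simp only [Form.substT, if_pos rfl, Form.FV]
      intro z hz
      rcases Finset.mem_sdiff.1 hz with ⟨h1, h2⟩
      exact Finset.mem_sdiff.2 ⟨Finset.mem_sdiff.2 ⟨h1, h2⟩, h2⟩
    · simp only [Form.substT, if_neg hyx, Form.FV]
      intro z hz
      rcases Finset.mem_sdiff.1 hz with ⟨h1, h2⟩
      rcases Finset.mem_sdiff.1 (ih h1) with ⟨h3, h4⟩
      exact Finset.mem_sdiff.2 ⟨Finset.mem_sdiff.2 ⟨h3, h2⟩, h4⟩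

lemma subst_box_const (a : C) (x : ℕ) (c : Fin n → C) (φ : Form n C Ap) :
    Form.subst a x (Form.box (fun i => Tm.const (c i)) φ)
      = Form.box (fun i => Tm.const (c i)) (Form.subst a x φ) := by
  simp [Form.subst, Form.substT]

end Aux

/-- existence lemma for ∀-MCSs. -/
theorem existence_lemma {n : ℕ} {C Ap : Type} [Infinite C] [Countable C]
    (X : Set (Form n C Ap)) (hX : SentenceSet X) (hmcs : MCS X) (hall : AllProp X)
    (d : Fin n → C) :
    ∃ Y : Set (Form n C Ap), SentenceSet Y ∧ MCS Y ∧ AllProp Y ∧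
      {ψ | Form.box (fun i => Tm.const (d i)) ψ ∈ X} ⊆ Y := by
  classical
  refine ⟨{ψ | Form.box (fun i => Tm.const (d i)) ψ ∈ X}, ?_, ⟨?_, ?_⟩, ?_, fun ψ h => h⟩
  · -- SentenceSet
    intro ψ hψ
    have := hX _ hψ
    simpa [Form.closed, FV_box_const] using this
  · -- Consistent
    rintro ⟨φ, ⟨L, hL, dL⟩, ⟨M, hM, dM⟩⟩
    have d1 : Deriv ((L ++ M).foldr Form.imp φ) :=
      deriv_weaken (fun χ h => List.mem_append.2 (Or.inl h)) dL
    have d2 : Deriv ((L ++ M).foldr Form.imp (Form.neg φ)) :=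
      deriv_weaken (fun χ h => List.mem_append.2 (Or.inr h)) dM
    have tautc : Deriv ((L ++ M).foldr Form.imp
        (Form.imp φ (Form.imp (Form.neg φ) (Form.and φ (Form.neg φ))))) := by
      refine deriv_weaken (L := []) (by simp) (Deriv.PC ?_)
      intro v
      simp only [List.foldr_nil, Form.imp, evalP]
      tauto
    have d3 : Deriv ((L ++ M).foldr Form.imp (Form.and φ (Form.neg φ))) :=
      deriv_foldr_mp (deriv_foldr_mp tautc d1) d2
    have hbox : DerivFrom X (Form.box (fun i => Tm.const (d i)) (Form.and φ (Form.neg φ))) := by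
      refine df_box_foldr (fun i => Tm.const (d i)) ?_
        (df_of_deriv (Deriv.Nec (fun i => Tm.const (d i)) d3))
      intro ψ hψ
      rcases List.mem_append.1 hψ with h | h
      · exact hL ψ h
      · exact hM ψ h
    have hnbox : DerivFrom X
        (Form.neg (Form.box (fun i => Tm.const (d i)) (Form.and φ (Form.neg φ)))) := by
      have hthm : Deriv (Form.neg (Form.and φ (Form.neg φ))) := by
        refine Deriv.PC ?_
        intro v
        simp only [evalP]
        tauto
      have hb := Deriv.Nec (fun i => Tm.const (d i)) hthm
      have hNx := Deriv.N (Ap := Ap) (fun i => Tm.const (d i)) (Form.and φ (Form.neg φ))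
      have taut2 : Deriv (Form.imp
          (Form.iff (Form.neg (Form.box (fun i => Tm.const (d i)) (Form.and φ (Form.neg φ))))
            (Form.box (fun i => Tm.const (d i)) (Form.neg (Form.and φ (Form.neg φ)))))
          (Form.imp (Form.box (fun i => Tm.const (d i)) (Form.neg (Form.and φ (Form.neg φ))))
            (Form.neg (Form.box (fun i => Tm.const (d i)) (Form.and φ (Form.neg φ)))))) := by
        refine Deriv.PC ?_
        intro v
        simp only [Form.imp, Form.iff, evalP]
        tauto
      exact df_of_deriv (Deriv.MP (Deriv.MP taut2 hNx) hb)
    exact hmcs.1 ⟨_, hbox, hnbox⟩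
  · -- maximality
    intro ψ hcl hψ hcons
    have hclb : Form.closed (Form.box (fun i => Tm.const (d i)) ψ) := by
      rw [Form.closed, FV_box_const]; exact hcl
    have hnb : Form.neg (Form.box (fun i => Tm.const (d i)) ψ) ∈ X := mcs_neg hmcs hclb hψ
    have hNx := Deriv.N (Ap := Ap) (fun i => Tm.const (d i)) ψ
    have taut3 : Deriv (Form.imp
        (Form.iff (Form.neg (Form.box (fun i => Tm.const (d i)) ψ))
          (Form.box (fun i => Tm.const (d i)) (Form.neg ψ)))
        (Form.imp (Form.neg (Form.box (fun i => Tm.const (d i)) ψ))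
          (Form.box (fun i => Tm.const (d i)) (Form.neg ψ)))) := by
      refine Deriv.PC ?_
      intro v
      simp only [Form.imp, Form.iff, evalP]
      tauto
    have hdf : DerivFrom X (Form.box (fun i => Tm.const (d i)) (Form.neg ψ)) :=
      df_mp (df_mp (df_of_deriv taut3) (df_of_deriv hNx)) (df_mem hnb)
    have hclb2 : Form.closed (Form.box (fun i => Tm.const (d i)) (Form.neg ψ)) := by
      rw [Form.closed, FV_box_const]; exact hcl
    have hmem : Form.box (fun i => Tm.const (d i)) (Form.neg ψ) ∈ X :=
      mcs_mem hmcs hclb2 hdf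
    exact hcons ⟨ψ, df_mem (Set.mem_insert ψ _),
      df_mem (Set.mem_insert_of_mem ψ hmem)⟩
  · -- AllProp
    intro φ x hFV
    have hFVb : Form.FV (Form.box (fun i => Tm.const (d i)) φ) ⊆ {x} := by
      rw [FV_box_const]; exact hFV
    obtain ⟨a, ha⟩ := hall (Form.box (fun i => Tm.const (d i)) φ) x hFVb
    rw [subst_box_const] at ha
    refine ⟨a, ?_⟩
    have hB : Deriv (Form.imp (Form.all x (Form.box (fun i => Tm.const (d i)) φ))
        (Form.box (fun i => Tm.const (d i)) (Form.all x φ))) :=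
      Deriv.B (fun i => Tm.const (d i)) x φ (fun i => by simp)
    have tautt : Deriv (Form.imp
        (Form.imp (Form.box (fun i => Tm.const (d i)) (Form.subst a x φ))
          (Form.all x (Form.box (fun i => Tm.const (d i)) φ)))
        (Form.imp
          (Form.imp (Form.all x (Form.box (fun i => Tm.const (d i)) φ))
            (Form.box (fun i => Tm.const (d i)) (Form.all x φ)))
          (Form.imp (Form.box (fun i => Tm.const (d i)) (Form.subst a x φ))
            (Form.box (fun i => Tm.const (d i)) (Form.all x φ))))) := by
      refine Deriv.PC ?_
      intro v
      simp only [Form.imp, evalP]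
      tauto
    have h1 : DerivFrom X
        (Form.imp (Form.box (fun i => Tm.const (d i)) (Form.subst a x φ))
          (Form.box (fun i => Tm.const (d i)) (Form.all x φ))) :=
      df_mp (df_mp (df_of_deriv tautt) (df_mem ha)) (df_of_deriv hB)
    have h2 : DerivFrom X (Form.box (fun i => Tm.const (d i))
        (Form.imp (Form.subst a x φ) (Form.all x φ))) :=
      df_mp (df_of_deriv (deriv_box_mp' (fun i => Tm.const (d i))
        (Form.subst a x φ) (Form.all x φ))) h1
    have hcl2 : Form.closed (Form.box (fun i => Tm.const (d i))
        (Form.imp (Form.subst a x φ) (Form.all x φ))) := by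
      rw [Form.closed, FV_box_const]
      rw [Finset.eq_empty_iff_forall_notMem]
      intro y hy
      have hy' : y ∈ Form.FV (Form.subst a x φ) ∪ (Form.FV φ \ {x}) := by
        simpa [Form.imp, Form.FV] using hy
      rcases Finset.mem_union.1 hy' with h | h
      · rcases Finset.mem_sdiff.1 (FV_substT_const a x φ h) with ⟨h1, h2⟩
        exact h2 (hFV h1)
      · rcases Finset.mem_sdiff.1 h with ⟨h1, h2⟩
        exact h2 (hFV h1)
    exact mcs_mem hmcs hcl2 h2
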